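/- Let G be a finitely generated abelian group with torsion subgroup T, b a torsion form on T, p ∈ 2G with divisibilities d_π (mod torsion) and d_m (Wilkens divisibility). Let F : G → G be an automorphism with F(p) = p and F preserving b on T, and for k ∈ S_{d_π} = {k : p - d_π k ∈ T} set t := F(k) - k ∈ T and P(F) := d_π² b(t,t) - 2 d_π b(p - d_π k, t) ∈ ℚ/2d_πℤ. Then P(F) lies in the subgroup d_m ℤ/2d_π ℤ, i.e. P(F) is an integer multiple of d_m modulo 2d_π. -/

import Mathlib

/-- The "term of automorphy" `Δ(β_k, t) = d_π² b(t,t) - 2 d_π b(β_k, t) ∈ ℚ/2d_πℤ`. -/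
noncomputable def Delta {G : Type*} [AddCommGroup G] (T : AddSubgroup G)
    (b : T → T → AddCircle (1 : ℚ)) (d : ℕ) (hd : (2 * (d : ℚ)) ≠ 0)
    (β t : T) : AddCircle (2 * (d : ℚ)) :=
  (d / 2 : ℕ) • (AddCircle.equivAddCircle (1 : ℚ) (2 * (d : ℚ)) one_ne_zero hd (b t t)) -
    AddCircle.equivAddCircle (1 : ℚ) (2 * (d : ℚ)) one_ne_zero hd (b β t)

lemma finOrder_of_smul' {G : Type*} [AddCommGroup G] {x : G} {n : ℕ} (hn : 0 < n)
    (h : IsOfFinAddOrder ((n : ℤ) • x)) : IsOfFinAddOrder x := by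
  rw [isOfFinAddOrder_iff_nsmul_eq_zero] at h ⊢
  obtain ⟨c, hc, hcx⟩ := h
  refine ⟨c * n, Nat.mul_pos hc hn, ?_⟩
  rw [natCast_zsmul] at hcx
  rw [mul_comm, mul_nsmul]
  exact hcx

/-- Divisibility lemma: if `p ≡ a•k` and `p ≡ bb•y` mod torsion, and `a` is maximal
among such divisors, then `bb ∣ a`. -/
lemma dvd_of_max' {G : Type*} [AddCommGroup G] (T : AddSubgroup G)
    (hT : ∀ x : G, x ∈ T ↔ IsOfFinAddOrder x) (p : G) (a bb : ℕ)
    (ha : 0 < a) (hb : 0 < bb) (k y : G)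
    (hk : p - (a : ℤ) • k ∈ T) (hy : p - (bb : ℤ) • y ∈ T)
    (hmax : ∀ s : ℕ, (∃ k : G, p - (s : ℤ) • k ∈ T) → s ≤ a) : bb ∣ a := by
  set Q := G ⧸ T
  let π : G →+ Q := QuotientAddGroup.mk' T
  have hπ0 : ∀ x : G, π x = 0 ↔ x ∈ T := fun x => QuotientAddGroup.eq_zero_iff x
  have htf : ∀ (x : Q) (n : ℤ), n ≠ 0 → n • x = 0 → x = 0 := by
    intro x n hn hnx
    obtain ⟨g, rfl⟩ := QuotientAddGroup.mk'_surjective T x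
    have : π ((n : ℤ) • g) = 0 := by rw [map_zsmul]; exact hnx
    rw [hπ0] at this
    have hg : IsOfFinAddOrder g := by
      have h1 : IsOfFinAddOrder ((n.natAbs : ℤ) • g) := by
        rcases Int.natAbs_eq n with h | h
        · rw [← h]; exact (hT _).1 this
        · rw [h] at this
          have := (hT _).1 this
          rw [neg_zsmul] at this
          simpa using this.neg
      exact finOrder_of_smul' (Int.natAbs_pos.mpr hn) h1
    exact (hπ0 g).mpr ((hT g).mpr hg)
  have hpk : π p = (a : ℤ) • π k := by
    have := (hπ0 _).mpr hk
    rw [map_sub, map_zsmul, sub_eq_zero] at this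
    exact this
  have hpy : π p = (bb : ℤ) • π y := by
    have := (hπ0 _).mpr hy
    rw [map_sub, map_zsmul, sub_eq_zero] at this
    exact this
  set g := Nat.gcd a bb with hg_def
  have hg0 : 0 < g := Nat.gcd_pos_of_pos_left _ ha
  set a' := a / g with ha'_def
  set b' := bb / g with hb'_def
  have hga : g * a' = a := Nat.mul_div_cancel' (Nat.gcd_dvd_left a bb)
  have hgb : g * b' = bb := Nat.mul_div_cancel' (Nat.gcd_dvd_right a bb)
  have hab' : (a' : ℤ) • π k = (b' : ℤ) • π y := by
    have h1 : (g : ℤ) • ((a' : ℤ) • π k - (b' : ℤ) • π y) = 0 := by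
      rw [smul_sub, smul_smul, smul_smul, ← Int.natCast_mul, ← Int.natCast_mul,
        hga, hgb, ← hpk, ← hpy, sub_self]
    have := htf _ (g : ℤ) (by exact_mod_cast hg0.ne') h1
    rwa [sub_eq_zero] at this
  have hco : Nat.Coprime a' b' := Nat.coprime_div_gcd_div_gcd hg0
  obtain ⟨α, β, hαβ⟩ := hco.isCoprime
  have hkb : π k = (b' : ℤ) • (α • π y + β • π k) := by
    have : (b' : ℤ) • (α • π y + β • π k)
        = (α * a' + β * b') • π k := by
      rw [smul_add, smul_smul, smul_smul, add_smul,
        mul_comm (b' : ℤ) α, mul_smul, ← hab', ← mul_smul, mul_comm (b' : ℤ) β]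
    rw [this, hαβ, one_smul]
  have hκ : p - ((a * b' : ℕ) : ℤ) • (α • y + β • k) ∈ T := by
    rw [← hπ0, map_sub, map_zsmul, sub_eq_zero, hpk, map_add, map_zsmul, map_zsmul]
    push_cast
    rw [mul_smul, ← hkb]
  have hle : a * b' ≤ a := hmax _ ⟨_, hκ⟩
  have hb'1 : b' = 1 := by
    have hb'pos : 0 < b' := Nat.div_pos (Nat.le_of_dvd hb (Nat.gcd_dvd_right a bb)) hg0
    nlinarith
  have : g = bb := by rw [← hgb, hb'1, mul_one]
  rw [← this]
  exact Nat.gcd_dvd_left a bb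

/-- for an automorphism `F` of `G` fixing `p` and preserving the torsion
linking form `b`, the value `P(F) = Δ(k, F(k)-k) = d_π² b(t,t) - 2d_π b(β_k,t)`
(for any `k ∈ S_{d_π}`, `t = F(k)-k`) lies in the subgroup `d_m ℤ/2d_π ℤ`,
i.e. it is an integer multiple of the Wilkens divisibility `d_m` modulo `2d_π`. -/
theorem stmt17 {G : Type*} [AddCommGroup G] [AddGroup.FG G]
    (T : AddSubgroup G) (hT : ∀ x : G, x ∈ T ↔ IsOfFinAddOrder x)
    (b : T → T → AddCircle (1 : ℚ))
    (hsymm : ∀ s t, b s t = b t s)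
    (hadd : ∀ s t u, b (s + t) u = b s u + b t u)
    (hbinj : ∀ s t : T, (∀ u, b u s = b u t) → s = t)
    (hbsurj : ∀ φ : T →+ AddCircle (1 : ℚ), ∃ s, ∀ u, φ u = b u s)
    (p : G) (hp2 : ∃ g : G, p = 2 • g)
    (dπ dm : ℕ) (hdπ0 : 0 < dπ) (heven : Even dπ) (hd2 : (2 * (dπ : ℚ)) ≠ 0)
    (hdπ : (∃ k : G, p - (dπ : ℤ) • k ∈ T) ∧
        ∀ s : ℕ, (∃ k : G, p - (s : ℤ) • k ∈ T) → s ≤ dπ)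
    (hdm : (∃ (m : ℕ) (y : G), 0 < m ∧ (m : ℤ) • p = ((dm * m ^ 2 : ℕ) : ℤ) • y) ∧
        ∀ s : ℕ, (∃ (m : ℕ) (y : G), 0 < m ∧ (m : ℤ) • p = ((s * m ^ 2 : ℕ) : ℤ) • y) → s ≤ dm)
    (F : G ≃+ G) (hFp : F p = p)
    (hFb : ∀ (s t : T) (hs : F (s : G) ∈ T) (ht : F (t : G) ∈ T),
        b ⟨F (s : G), hs⟩ ⟨F (t : G), ht⟩ = b s t) :
    ∀ (k : G) (hk : p - (dπ : ℤ) • k ∈ T) (ht : F k - k ∈ T),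
      ∃ c : ℤ, Delta T b dπ hd2 ⟨p - (dπ : ℤ) • k, hk⟩ ⟨F k - k, ht⟩ =
        (((c * dm : ℤ) : ℚ) : AddCircle (2 * (dπ : ℚ))) := by
  intro k hk ht
  -- bilinearity helpers
  have hzl : ∀ (n : ℤ) (x z : T), b (n • x) z = n • b x z := fun n x z =>
    map_zsmul (AddMonoidHom.mk' (fun w => b w z) (fun u v => hadd u v z)) n x
  have hsubl : ∀ (x y z : T), b (x - y) z = b x z - b y z := fun x y z =>
    map_sub (AddMonoidHom.mk' (fun w => b w z) (fun u v => hadd u v z)) x y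
  have hz0 : ∀ z : T, b 0 z = 0 := fun z =>
    map_zero (AddMonoidHom.mk' (fun w => b w z) (fun u v => hadd u v z))
  have hzr : ∀ (n : ℤ) (x z : T), b z (n • x) = n • b z x := fun n x z => by
    rw [hsymm, hzl, hsymm]
  have hsubr : ∀ (x y z : T), b z (x - y) = b z x - b z y := fun x y z => by
    rw [hsymm, hsubl, hsymm x z, hsymm y z]
  have haddr : ∀ (x y z : T), b z (x + y) = b z x + b z y := fun x y z => by
    rw [hsymm, hadd, hsymm x z, hsymm y z]
  -- basic positivity
  obtain ⟨m, y, hm, hmy⟩ := hdm.1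
  have hpT : p ∉ T := by
    intro hp
    have := hdπ.2 (dπ + 1) ⟨0, by simpa using hp⟩
    omega
  have he : 0 < dm := by
    rcases Nat.eq_zero_or_pos dm with h0 | h
    · exfalso
      apply hpT
      rw [hT]
      apply finOrder_of_smul' hm
      rw [hmy, h0]
      simp
    · exact h
  -- the Wilkens relation gives `p ≡ (dm*m) • y` mod torsion
  have hyT : p - ((dm * m : ℕ) : ℤ) • y ∈ T := by
    rw [hT]
    apply finOrder_of_smul' hm
    have hz : (m : ℤ) • (p - ((dm * m : ℕ) : ℤ) • y) = 0 := by
      rw [smul_sub, smul_smul, hmy, sub_eq_zero]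
      congr 1
      push_cast
      ring
    rw [hz]
    exact .zero
  -- divisibility: dm*m ∣ dπ
  obtain ⟨q, hq⟩ : dm * m ∣ dπ :=
    dvd_of_max' T hT p dπ (dm * m) hdπ0 (Nat.mul_pos he hm) k y hk hyT hdπ.2
  have hq0 : 0 < q := by
    rcases Nat.eq_zero_or_pos q with h0 | h
    · rw [h0, mul_zero] at hq; omega
    · exact h
  -- F maps T to T
  have hFT : ∀ x : G, x ∈ T → F x ∈ T := by
    intro x hx
    rw [hT] at hx ⊢
    rw [isOfFinAddOrder_iff_nsmul_eq_zero] at hx ⊢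
    obtain ⟨n, hn, hnx⟩ := hx
    exact ⟨n, hn, by rw [← map_nsmul, hnx, map_zero]⟩
  -- elements
  have hA : (m : ℤ) • (p - (dπ : ℤ) • k) = ((dm * m ^ 2 : ℕ) : ℤ) • (y - (q : ℤ) • k) := by
    rw [smul_sub, smul_smul, hmy, smul_sub, smul_smul]
    rw [sub_right_inj]
    congr 1
    push_cast [hq]
    ring
  have hτ : y - (q : ℤ) • k ∈ T := by
    rw [hT]
    apply finOrder_of_smul' (n := dm * m ^ 2) (by positivity)
    rw [← hA]
    exact (hT _).1 (T.zsmul_mem hk (m : ℤ))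
  have hsmem : F y - y ∈ T := by
    rw [hT]
    apply finOrder_of_smul' (n := dm * m ^ 2) (by positivity)
    have hz : ((dm * m ^ 2 : ℕ) : ℤ) • (F y - y) = 0 := by
      rw [smul_sub, ← map_zsmul, ← hmy, map_zsmul, hFp, sub_self]
    rw [hz]
    exact .zero
  set βT : T := (⟨p - (dπ : ℤ) • k, hk⟩ : T) with hβT
  set tT : T := (⟨F k - k, ht⟩ : T) with htT
  set τT : T := (⟨y - (q : ℤ) • k, hτ⟩ : T) with hτT
  set sT : T := (⟨F y - y, hsmem⟩ : T) with hsT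
  have hFτmem : F (y - (q : ℤ) • k) ∈ T := hFT _ hτ
  set σT : T := (⟨F (y - (q : ℤ) • k) - (y - (q : ℤ) • k), T.sub_mem hFτmem hτ⟩ : T) with hσT
  -- relations in T
  have rA : (m : ℤ) • βT = ((dm * m ^ 2 : ℕ) : ℤ) • τT := by
    apply Subtype.ext
    push_cast
    exact hA
  have rB : ((dm * m ^ 2 : ℕ) : ℤ) • sT = 0 := by
    have hmy' : (m : ℤ) • p = ((dm : ℤ) * (m : ℤ) ^ 2) • y := by
      exact_mod_cast hmy
    apply Subtype.ext
    push_cast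
    rw [smul_sub, ← map_zsmul, ← hmy', map_zsmul, hFp, sub_self]
  have rC : (q : ℤ) • tT = sT - σT := by
    apply Subtype.ext
    push_cast
    show (q : ℤ) • (F k - k) = (F y - y) - (F (y - (q : ℤ) • k) - (y - (q : ℤ) • k))
    rw [smul_sub, map_sub, map_zsmul]
    abel
  have hFτeq : (⟨F ((τT : G)), hFτmem⟩ : T) = τT + σT := by
    apply Subtype.ext
    push_cast
    show F (y - (q : ℤ) • k) = (y - (q : ℤ) • k) + (F (y - (q : ℤ) • k) - (y - (q : ℤ) • k))
    abel
  have hσσ : b σT σT = -((2 : ℤ) • b τT σT) := by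
    have h1 := hFb τT τT hFτmem hFτmem
    rw [hFτeq] at h1
    rw [hadd, haddr, haddr] at h1
    have h2 : b σT τT = b τT σT := hsymm _ _
    rw [h2] at h1
    have : b τT τT + b τT σT + (b τT σT + b σT σT) = b τT τT := h1
    have h3 : b σT σT = - b τT σT - b τT σT := by
      have := this
      abel_nf at this ⊢
      linear_combination (norm := abel_nf) this
    rw [h3]
    abel
  -- annihilation facts
  have e2 : ((dm * m ^ 2 : ℕ) : ℤ) • b sT sT = 0 := by rw [← hzl, rB, hz0]
  have e3 : ((dm * m ^ 2 : ℕ) : ℤ) • b sT σT = 0 := by rw [← hzl, rB, hz0]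
  have e4 : ((dm * m ^ 2 : ℕ) : ℤ) • b sT τT = 0 := by rw [← hzl, rB, hz0]
  have e1 : (m : ℤ) • b βT tT = ((dm * m ^ 2 : ℕ) : ℤ) • b τT tT := by
    rw [← hzl, ← hzl, rA]
  have inner : (q : ℤ) • ((q : ℤ) • b tT tT) - (2 : ℤ) • ((q : ℤ) • b τT tT)
      = b sT sT - (2 : ℤ) • b sT σT - (2 : ℤ) • b sT τT := by
    have i1 : (q : ℤ) • ((q : ℤ) • b tT tT) = b ((q : ℤ) • tT) ((q : ℤ) • tT) := by
      rw [hzl, hzr]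
    have i2 : (q : ℤ) • b τT tT = b τT ((q : ℤ) • tT) := (hzr _ _ _).symm
    rw [i1, i2, rC, hsubl, hsubr, hsubr, hsubr, hσσ,
      hsymm σT sT, hsymm τT sT]
    abel
  have key : ((m * q : ℕ) : ℤ) • ((dπ : ℤ) • b tT tT - (2 : ℤ) • b βT tT) = 0 := by
    have L1 : ((m * q : ℕ) : ℤ) • ((dπ : ℤ) • b tT tT - (2 : ℤ) • b βT tT)
        = ((dm * m ^ 2 : ℕ) : ℤ) • ((q : ℤ) • ((q : ℤ) • b tT tT))
          - ((dm * m ^ 2 : ℕ) : ℤ) • ((2 : ℤ) • ((q : ℤ) • b τT tT)) := by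
      rw [smul_sub]
      congr 1
      · rw [smul_smul, smul_smul, smul_smul]
        congr 1
        push_cast [hq]
        ring
      · have hc : ((m * q : ℕ) : ℤ) * 2 = ((q : ℤ) * 2) * (m : ℤ) := by push_cast; ring
        rw [smul_smul, hc, ← smul_smul, e1, smul_smul, smul_smul, smul_smul]
        congr 1
        push_cast
        ring
    rw [L1, ← smul_sub, inner, smul_sub, smul_sub, e2,
      smul_comm ((dm * m ^ 2 : ℕ) : ℤ) (2 : ℤ), e3,
      smul_comm ((dm * m ^ 2 : ℕ) : ℤ) (2 : ℤ), e4]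
    simp
  -- transfer to AddCircle (2 dπ)
  set φ := AddCircle.equivAddCircle (1 : ℚ) (2 * (dπ : ℚ)) one_ne_zero hd2 with hφ
  have keyφ : ((m * q : ℕ) : ℤ) • ((dπ : ℤ) • φ (b tT tT) - (2 : ℤ) • φ (b βT tT)) = 0 := by
    have h := congrArg φ key
    simpa only [map_zsmul, map_sub, map_zero] using h
  have hd2' : dπ / 2 * 2 = dπ := by
    obtain ⟨d2, hd2''⟩ := heven; omega
  have hDelta2 : (2 : ℤ) • Delta T b dπ hd2 βT tT
      = (dπ : ℤ) • φ (b tT tT) - (2 : ℤ) • φ (b βT tT) := by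
    show (2 : ℤ) • ((dπ / 2 : ℕ) • φ (b tT tT) - φ (b βT tT)) = _
    rw [smul_sub]
    congr 1
    · rw [← natCast_zsmul (φ (b tT tT)) (dπ / 2), smul_smul]
      congr 1
      push_cast
      omega
  have keyD : ((2 * (m * q) : ℕ) : ℤ) • Delta T b dπ hd2 βT tT = 0 := by
    have hc : ((2 * (m * q) : ℕ) : ℤ) = ((m * q : ℕ) : ℤ) * 2 := by push_cast; ring
    rw [hc, ← smul_smul, hDelta2, keyφ]
  obtain ⟨x, hx⟩ := QuotientAddGroup.mk'_surjective
    (AddSubgroup.zmultiples (2 * (dπ : ℚ))) (Delta T b dπ hd2 βT tT)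
  have hx' : Delta T b dπ hd2 βT tT = (x : AddCircle (2 * (dπ : ℚ))) := hx.symm
  rw [hx', ← AddCircle.coe_zsmul, AddCircle.coe_eq_zero_iff] at keyD
  obtain ⟨n, hn⟩ := keyD
  refine ⟨n, ?_⟩
  rw [hx']
  have h1 : (n : ℚ) * (2 * (dπ : ℚ)) = (2 * ((m : ℚ) * (q : ℚ))) * x := by
    rw [zsmul_eq_mul, zsmul_eq_mul] at hn
    push_cast at hn
    linarith [hn]
  have h3 : (dπ : ℚ) = (dm : ℚ) * m * q := by exact_mod_cast congrArg (Nat.cast (R := ℚ)) hq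
  have hxval : x = ((n : ℚ) * (dm : ℚ)) := by
    have hne : (2 : ℚ) * ((m : ℚ) * (q : ℚ)) ≠ 0 := by positivity
    apply mul_left_cancel₀ hne
    rw [h3] at h1
    linear_combination -h1
  have hxval' : x = ((n * dm : ℤ) : ℚ) := by rw [hxval]; push_cast; ring
  exact congrArg (fun r : ℚ => (r : AddCircle (2 * (dπ : ℚ)))) hxval'
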